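/- Let N ≥ 1, let φ : ℝ^N → ℝ^N be a continuously differentiable bijection whose inverse φ⁻¹ is also continuously differentiable, and let ψ : ℝ^N → ℝ^N be continuously differentiable. Then for every point x, the function t ↦ det D(φ + tψ)(x) is differentiable at t = 0 and its derivative d there satisfies d · det D(φ⁻¹)(φ(x)) = div(ψ ∘ φ⁻¹)(φ(x)), where div f(y) = Σ_i ∂_i f_i(y) denotes the divergence and D denotes the Jacobian matrix. -/

import Mathlib

/-- Jacobian matrix of f at x: entries (Df(x))_{ij} = ∂_j f_i(x). -/
noncomputable def jac {N : ℕ}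
    (f : EuclideanSpace ℝ (Fin N) → EuclideanSpace ℝ (Fin N))
    (x : EuclideanSpace ℝ (Fin N)) : Matrix (Fin N) (Fin N) ℝ :=
  Matrix.of fun i j => fderiv ℝ f x (EuclideanSpace.single j 1) i

/-- Divergence of a vector field: div f(x) = Σ_i ∂_i f_i(x). -/
noncomputable def diverg {N : ℕ}
    (f : EuclideanSpace ℝ (Fin N) → EuclideanSpace ℝ (Fin N))
    (x : EuclideanSpace ℝ (Fin N)) : ℝ :=
  ∑ i, fderiv ℝ f x (EuclideanSpace.single i 1) i

section Aux

variable {N : ℕ}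

local notation "E" => EuclideanSpace ℝ (Fin N)

lemma piLp_sum_apply {κ : Type*} (s : Finset κ) (f : κ → E) (i : Fin N) :
    (∑ k ∈ s, f k) i = ∑ k ∈ s, f k i := by
  rw [WithLp.ofLp_sum, Finset.sum_apply]

lemma eucl_eq_sum (v : E) : v = ∑ k, v k • EuclideanSpace.single k (1:ℝ) := by
  ext i
  rw [piLp_sum_apply]
  simp [EuclideanSpace.single_apply, eq_comm]

lemma clm_apply_eq_sum (L : E →L[ℝ] E) (v : E) (i : Fin N) :
    (L v) i = ∑ k, v k * (L (EuclideanSpace.single k 1)) i := by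
  conv_lhs => rw [eucl_eq_sum v]
  rw [map_sum]
  rw [piLp_sum_apply]
  simp

lemma jac_comp (f g : E → E) (y : E) (hf : DifferentiableAt ℝ f (g y))
    (hg : DifferentiableAt ℝ g y) :
    jac (fun z => f (g z)) y = jac f (g y) * jac g y := by
  ext i j
  have := fderiv_comp y hf hg
  simp only [jac, Matrix.of_apply, Matrix.mul_apply]
  rw [show (fun z => f (g z)) = f ∘ g from rfl, this]
  simp only [ContinuousLinearMap.comp_apply]
  rw [clm_apply_eq_sum]
  exact Finset.sum_congr rfl fun k _ => by ring

lemma jac_id (y : E) : jac (id : E → E) y = 1 := by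
  ext i j
  simp [jac, Matrix.one_apply, EuclideanSpace.single_apply, eq_comm]

lemma diverg_eq_trace (f : E → E) (y : E) :
    diverg f y = (jac f y).trace := by
  simp [diverg, jac, Matrix.trace, Matrix.diag]

end Aux

/-- d/dt|_{t=0} det D(φ+tψ)(x) · det D(φ⁻¹)(φ(x)) = div(ψ∘φ⁻¹)(φ(x)). -/
theorem deriv_det_jacobian_eq_divergence
    {N : ℕ} (hN : 1 ≤ N)
    (φ φinv ψ : EuclideanSpace ℝ (Fin N) → EuclideanSpace ℝ (Fin N))
    (hφ : ContDiff ℝ 1 φ) (hφinv : ContDiff ℝ 1 φinv) (hψ : ContDiff ℝ 1 ψ)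
    (hleft : Function.LeftInverse φinv φ) (hright : Function.RightInverse φinv φ)
    (x : EuclideanSpace ℝ (Fin N)) :
    ∃ d : ℝ,
      HasDerivAt (fun t : ℝ => (jac (fun y => φ y + t • ψ y) x).det) d 0 ∧
        d * (jac φinv (φ x)).det = diverg (fun y => ψ (φinv y)) (φ x) := by
  have hφd : Differentiable ℝ φ := hφ.differentiable one_ne_zero
  have hφinvd : Differentiable ℝ φinv := hφinv.differentiable one_ne_zero
  have hψd : Differentiable ℝ ψ := hψ.differentiable one_ne_zero
  set A := jac φ x with hA
  set B := jac ψ x with hB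
  set C := jac φinv (φ x) with hC
  have hinvx : φinv (φ x) = x := hleft x
  have hCA : C * A = 1 := by
    have h := jac_comp φinv φ x (hφinvd _) (hφd x)
    rw [show (fun z => φinv (φ z)) = id from funext hleft, jac_id] at h
    exact h.symm
  have hAC : A * C = 1 := by
    have h := jac_comp φ φinv (φ x) (hφd _) (hφinvd (φ x))
    rw [show (fun z => φ (φinv z)) = id from funext hright, jac_id, hinvx] at h
    exact h.symm
  have hdet1 : A.det * C.det = 1 := by rw [← Matrix.det_mul, hAC, Matrix.det_one]
  have hBC : jac (fun y => ψ (φinv y)) (φ x) = B * C := by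
    rw [jac_comp ψ φinv (φ x) (hψd _) (hφinvd (φ x)), hinvx]
  set M := C * B with hM
  set q := ((1 + (Polynomial.X : Polynomial ℝ) • M.map Polynomial.C).det).divX.divX with hq
  have hjact : ∀ t : ℝ, jac (fun y => φ y + t • ψ y) x = A + t • B := by
    intro t
    have hfd : fderiv ℝ (fun y => φ y + t • ψ y) x = fderiv ℝ φ x + t • fderiv ℝ ψ x :=
      ((hφd x).hasFDerivAt.add ((hψd x).hasFDerivAt.const_smul t)).fderiv
    ext i j
    simp only [jac, Matrix.of_apply, hfd, ContinuousLinearMap.add_apply,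
      ContinuousLinearMap.smul_apply, Matrix.add_apply, Matrix.smul_apply, PiLp.add_apply,
      PiLp.smul_apply, smul_eq_mul, hA, hB]
  have key : ∀ t : ℝ, (jac (fun y => φ y + t • ψ y) x).det
      = A.det * (1 + M.trace * t + q.eval t * t ^ 2) := by
    intro t
    rw [hjact t]
    have : A * (1 + t • M) = A + t • B := by
      rw [Matrix.mul_add, Matrix.mul_one, Matrix.mul_smul, hM, ← Matrix.mul_assoc, hAC,
        Matrix.one_mul]
    rw [← this, Matrix.det_mul, Matrix.det_one_add_smul]
  refine ⟨A.det * M.trace, ?_, ?_⟩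
  · have h1 : HasDerivAt (fun t : ℝ => 1 + M.trace * t + q.eval t * t ^ 2)
        (M.trace) 0 := by
      have h2 := ((hasDerivAt_const (0:ℝ) (1:ℝ)).add ((hasDerivAt_id (0:ℝ)).const_mul M.trace)).add
        ((q.hasDerivAt 0).mul (hasDerivAt_pow 2 (0:ℝ)))
      simpa [Pi.add_def, Pi.mul_def] using h2
    have h3 := h1.const_mul A.det
    have : (fun t : ℝ => (jac (fun y => φ y + t • ψ y) x).det)
        = fun t : ℝ => A.det * (1 + M.trace * t + q.eval t * t ^ 2) := funext key
    rw [this]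
    exact h3
  · rw [diverg_eq_trace, hBC]
    conv_rhs => rw [Matrix.trace_mul_comm]
    have h4 : A.det * M.trace * C.det = M.trace * (A.det * C.det) := by ring
    rw [h4, hdet1, mul_one, hM]
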